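/- (Sontag's lemma on 𝒦𝓛-estimates) For each 𝒦𝓛-function β and each λ ≥ 0, there exist φ₁, φ₂ ∈ 𝒦∞ with φ₁ locally Lipschitz such that φ₁(β(s, t)) ≤ φ₂(s) e^{−λ t} for all s, t ≥ 0. -/

import Mathlib

noncomputable section
open Set Filter

def IsKFun (α : ℝ → ℝ) : Prop :=
  ContinuousOn α (Set.Ici 0) ∧ StrictMonoOn α (Set.Ici 0) ∧ α 0 = 0

def IsKInfFun (α : ℝ → ℝ) : Prop :=
  IsKFun α ∧ Filter.Tendsto α Filter.atTop Filter.atTop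

def IsKLFun (β : ℝ → ℝ → ℝ) : Prop :=
  (∀ t ≥ (0:ℝ), IsKFun (fun s => β s t)) ∧
  (∀ s > (0:ℝ), ContinuousOn (β s) (Set.Ici 0) ∧ StrictAntiOn (β s) (Set.Ici 0) ∧
    Filter.Tendsto (β s) Filter.atTop (nhds 0))

namespace Stmt8Aux

variable (β : ℝ → ℝ → ℝ) (lam : ℝ)

/-- summand for ω -/
def w (n : ℕ) (t : ℝ) : ℝ := (1/2:ℝ)^(n+1) * min (β ((n:ℝ)+1) t) 1

/-- the common decay function -/
def om (t : ℝ) : ℝ := ∑' n : ℕ, w β n t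

/-- last time ω is above level r -/
def TT (r : ℝ) : ℝ := sSup {t : ℝ | 0 ≤ t ∧ r ≤ om β t}

def aa (m : ℕ) : ℝ := 2^(m+1) * max 1 (β ((m:ℝ)+1) 0)

def bb (m : ℕ) : ℝ := Real.exp (lam * TT β (1/(((m:ℝ)+1) * aa β m)))

/-- density of φ₁ -/
def HH (u : ℝ) : ℝ :=
  if 0 < u then min 1 (⨅ m : ℕ, bb β lam m * Real.exp (-(lam * TT β (u / aa β m)))) else 0

def ph (x : ℝ) : ℝ := ∫ u in (0:ℝ)..x, HH β lam u

def Abar (u : ℝ) : ℝ := 2 * aa β (⌈u⌉₊ - 1) * bb β lam (⌈u⌉₊ - 1)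

def Kf (s : ℝ) : ℝ := ∫ u in s..(s+1), Abar β lam u

def ph2 (s : ℝ) : ℝ := ph β lam (β s 0 + s) * Kf β lam s + s

variable {β lam}
variable (hβ : IsKLFun β) (hlam : 0 ≤ lam)

section BetaBasic
include hβ

lemma beta_zero {t : ℝ} (ht : 0 ≤ t) : β 0 t = 0 := (hβ.1 t ht).2.2

lemma beta_mono_s {s₁ s₂ t : ℝ} (h1 : 0 ≤ s₁) (h2 : s₁ ≤ s₂) (ht : 0 ≤ t) :
    β s₁ t ≤ β s₂ t :=
  (hβ.1 t ht).2.1.monotoneOn h1 (h1.trans h2) h2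

lemma beta_nonneg {s t : ℝ} (hs : 0 ≤ s) (ht : 0 ≤ t) : 0 ≤ β s t := by
  have := beta_mono_s hβ (le_refl (0:ℝ)) hs ht
  rwa [beta_zero hβ ht] at this

lemma beta_pos {s t : ℝ} (hs : 0 < s) (ht : 0 ≤ t) : 0 < β s t := by
  have := (hβ.1 t ht).2.1 (self_mem_Ici (α := ℝ)) (mem_Ici.mpr hs.le) hs
  rwa [show (fun s => β s t) 0 = 0 from beta_zero hβ ht] at this

lemma beta_anti_t {s t₁ t₂ : ℝ} (hs : 0 < s) (h1 : 0 ≤ t₁) (h2 : t₁ ≤ t₂) :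
    β s t₂ ≤ β s t₁ :=
  (hβ.2 s hs).2.1.antitoneOn h1 (h1.trans h2) h2

end BetaBasic

section Om
include hβ

lemma w_nonneg (n : ℕ) {t : ℝ} (ht : 0 ≤ t) : 0 ≤ w β n t := by
  have h1 : (0:ℝ) ≤ β ((n:ℝ)+1) t := beta_nonneg hβ (by positivity) ht
  have h2 : (0:ℝ) ≤ min (β ((n:ℝ)+1) t) 1 := le_min h1 zero_le_one
  exact mul_nonneg (by positivity) h2

omit hβ in
lemma w_le (n : ℕ) (t : ℝ) : w β n t ≤ (1/2:ℝ)^(n+1) := by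
  have h : min (β ((n:ℝ)+1) t) 1 ≤ 1 := min_le_right _ _
  calc w β n t ≤ (1/2:ℝ)^(n+1) * 1 := by
        exact mul_le_mul_of_nonneg_left h (by positivity)
    _ = (1/2:ℝ)^(n+1) := mul_one _

omit hβ in
lemma summable_halfpow : Summable (fun n : ℕ => (1/2:ℝ)^(n+1)) := by
  have h : Summable (fun n : ℕ => (1/2:ℝ)^n) :=
    summable_geometric_of_lt_one (by norm_num) (by norm_num)
  simpa [pow_succ] using h.mul_right (1/2:ℝ)

lemma summable_w {t : ℝ} (ht : 0 ≤ t) : Summable (fun n => w β n t) :=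
  Summable.of_nonneg_of_le (fun n => w_nonneg hβ n ht) (fun n => w_le n t) summable_halfpow

lemma om_pos {t : ℝ} (ht : 0 ≤ t) : 0 < om β t := by
  have h0 : 0 < w β 0 t := by
    have hb : (0:ℝ) < β (((0:ℕ):ℝ)+1) t := beta_pos hβ (by norm_num) ht
    have : (0:ℝ) < min (β (((0:ℕ):ℝ)+1) t) 1 := lt_min hb one_pos
    unfold w
    positivity
  have := Summable.le_tsum (summable_w hβ ht) 0 (fun n _ => w_nonneg hβ n ht)
  exact lt_of_lt_of_le h0 this

lemma om_le_two {t : ℝ} (ht : 0 ≤ t) : om β t ≤ 2 := by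
  have h1 : om β t ≤ ∑' n : ℕ, (1/2:ℝ)^n := by
    refine Summable.tsum_le_tsum (fun n => ?_) (summable_w hβ ht)
      (summable_geometric_of_lt_one (by norm_num) (by norm_num))
    exact (w_le n t).trans (pow_le_pow_of_le_one (by norm_num) (by norm_num) (Nat.le_succ n))
  calc om β t ≤ ∑' n : ℕ, (1/2:ℝ)^n := h1
    _ = 2 := by
        rw [tsum_geometric_of_lt_one (by norm_num) (by norm_num)]; norm_num

lemma om_tendsto : Tendsto (om β) atTop (nhds 0) := by
  have h := tendsto_tsum_of_dominated_convergence (𝓕 := atTop)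
    (f := fun t n => w β n t) (g := fun _ : ℕ => (0:ℝ))
    (bound := fun n : ℕ => (1/2:ℝ)^(n+1)) summable_halfpow
    (fun k => ?_) ?_
  · rw [tsum_zero] at h; exact h
  · -- pointwise limit
    have hβk : Tendsto (β ((k:ℝ)+1)) atTop (nhds 0) :=
      (hβ.2 ((k:ℝ)+1) (by positivity)).2.2
    have hmin : Tendsto (fun t => min (β ((k:ℝ)+1) t) 1) atTop (nhds (min 0 1)) :=
      hβk.min tendsto_const_nhds
    have : Tendsto (fun t => (1/2:ℝ)^(k+1) * min (β ((k:ℝ)+1) t) 1) atTop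
        (nhds ((1/2:ℝ)^(k+1) * min 0 1)) := hmin.const_mul _
    simpa [w] using this
  · -- uniform bound
    filter_upwards [eventually_ge_atTop (0:ℝ)] with t ht k
    have h1 : 0 ≤ w β k t := w_nonneg hβ k ht
    have h2 : w β k t ≤ (1/2:ℝ)^(k+1) := w_le k t
    rw [Real.norm_eq_abs, abs_of_nonneg h1]
    exact h2

lemma beta_le_om (m : ℕ) {t : ℝ} (ht : 0 ≤ t) : β ((m:ℝ)+1) t ≤ aa β m * om β t := by
  have hwm : w β m t ≤ om β t := Summable.le_tsum (summable_w hβ ht) m (fun n _ => w_nonneg hβ n ht)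
  have hpow : (0:ℝ) < (1/2:ℝ)^(m+1) := by positivity
  have haa : aa β m * (1/2:ℝ)^(m+1) = max 1 (β ((m:ℝ)+1) 0) := by
    unfold aa
    rw [mul_comm ((2:ℝ)^(m+1)), mul_assoc]
    have : (2:ℝ)^(m+1) * (1/2:ℝ)^(m+1) = 1 := by
      rw [← mul_pow]; norm_num
    rw [this, mul_one]
  rcases le_or_gt (β ((m:ℝ)+1) t) 1 with hle | hgt
  · -- min = β
    have hw : w β m t = (1/2:ℝ)^(m+1) * β ((m:ℝ)+1) t := by
      unfold w; rw [min_eq_left hle]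
    have h2 : (1/2:ℝ)^(m+1) * β ((m:ℝ)+1) t ≤ om β t := hw ▸ hwm
    have haa1 : (1:ℝ) ≤ aa β m * (1/2:ℝ)^(m+1) := by rw [haa]; exact le_max_left _ _
    calc β ((m:ℝ)+1) t = 1 * β ((m:ℝ)+1) t := (one_mul _).symm
      _ ≤ (aa β m * (1/2:ℝ)^(m+1)) * β ((m:ℝ)+1) t :=
          mul_le_mul_of_nonneg_right haa1 (beta_nonneg hβ (by positivity) ht)
      _ = aa β m * ((1/2:ℝ)^(m+1) * β ((m:ℝ)+1) t) := by ring
      _ ≤ aa β m * om β t := by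
          refine mul_le_mul_of_nonneg_left h2 ?_
          unfold aa; positivity
  · -- min = 1
    have hw : w β m t = (1/2:ℝ)^(m+1) := by
      unfold w; rw [min_eq_right hgt.le, mul_one]
    have h2 : (1/2:ℝ)^(m+1) ≤ om β t := hw ▸ hwm
    calc β ((m:ℝ)+1) t ≤ β ((m:ℝ)+1) 0 := beta_anti_t hβ (by positivity) le_rfl ht
      _ ≤ max 1 (β ((m:ℝ)+1) 0) := le_max_right _ _
      _ = aa β m * (1/2:ℝ)^(m+1) := haa.symm
      _ ≤ aa β m * om β t := by
          refine mul_le_mul_of_nonneg_left h2 ?_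
          unfold aa; positivity

end Om

section TTsec

lemma TT_nonneg (r : ℝ) : 0 ≤ TT β r := by
  unfold TT
  by_cases hb : BddAbove {t : ℝ | 0 ≤ t ∧ r ≤ om β t}
  · rcases Set.eq_empty_or_nonempty {t : ℝ | 0 ≤ t ∧ r ≤ om β t} with he | hne
    · rw [he, Real.sSup_empty]
    · obtain ⟨t, ht⟩ := hne
      exact ht.1.trans (le_csSup hb ht)
  · rw [Real.sSup_of_not_bddAbove hb]

include hβ

lemma bddAbove_S {r : ℝ} (hr : 0 < r) : BddAbove {t : ℝ | 0 ≤ t ∧ r ≤ om β t} := by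
  have hev : ∀ᶠ t in atTop, om β t < r := (om_tendsto hβ).eventually_lt_const hr
  obtain ⟨T₀, hT₀⟩ := eventually_atTop.mp hev
  refine ⟨T₀, fun t ht => ?_⟩
  by_contra hgt
  push_neg at hgt
  exact absurd ht.2 (not_le.mpr (hT₀ t hgt.le))

lemma TT_anti {r₁ r₂ : ℝ} (h0 : 0 < r₁) (h : r₁ ≤ r₂) : TT β r₂ ≤ TT β r₁ := by
  rcases Set.eq_empty_or_nonempty {t : ℝ | 0 ≤ t ∧ r₂ ≤ om β t} with he | hne
  · unfold TT; rw [he, Real.sSup_empty]; exact TT_nonneg r₁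
  · exact csSup_le_csSup (bddAbove_S hβ h0) hne (fun t ht => ⟨ht.1, h.trans ht.2⟩)

lemma le_TT_om {t : ℝ} (ht : 0 ≤ t) : t ≤ TT β (om β t) :=
  le_csSup (bddAbove_S hβ (om_pos hβ ht)) ⟨ht, le_rfl⟩

end TTsec

section Consts

lemma aa_pos (m : ℕ) : 0 < aa β m := by
  unfold aa; positivity

include hβ in
lemma aa_mono : Monotone (aa β) := by
  intro m₁ m₂ h
  unfold aa
  have h1 : ((m₁:ℝ)+1) ≤ ((m₂:ℝ)+1) := by
    have := (Nat.cast_le (α := ℝ)).mpr h; linarith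
  refine mul_le_mul ?_ ?_ ?_ (by positivity)
  · exact pow_le_pow_right₀ (by norm_num) (by omega)
  · exact max_le_max le_rfl (beta_mono_s hβ (by positivity) h1 le_rfl)
  · exact le_max_of_le_left zero_le_one

lemma bb_pos (m : ℕ) : 0 < bb β lam m := Real.exp_pos _

lemma maa_pos (m : ℕ) : 0 < ((m:ℝ)+1) * aa β m :=
  mul_pos (by positivity) (aa_pos m)

include hβ hlam in
lemma bb_mono : Monotone (bb β lam) := by
  intro m₁ m₂ h
  unfold bb
  apply Real.exp_le_exp.mpr
  apply mul_le_mul_of_nonneg_left _ hlam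
  apply TT_anti hβ
  · exact one_div_pos.mpr (maa_pos m₂)
  · apply one_div_le_one_div_of_le (maa_pos m₁)
    have h1 : ((m₁:ℝ)+1) ≤ ((m₂:ℝ)+1) := by
      have := (Nat.cast_le (α := ℝ)).mpr h; linarith
    exact mul_le_mul h1 (aa_mono hβ h) (aa_pos (β := β) m₁).le (show (0:ℝ) ≤ (m₂:ℝ)+1 by positivity)

end Consts

section Hsec

lemma HH_term_nonneg (m : ℕ) (u : ℝ) :
    0 ≤ bb β lam m * Real.exp (-(lam * TT β (u / aa β m))) :=
  mul_nonneg (bb_pos m).le (Real.exp_nonneg _)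

lemma HH_bddBelow (u : ℝ) :
    BddBelow (Set.range fun m : ℕ => bb β lam m * Real.exp (-(lam * TT β (u / aa β m)))) := by
  refine ⟨0, fun x hx => ?_⟩
  obtain ⟨m, rfl⟩ := hx
  exact HH_term_nonneg m u

lemma HH_nonneg (u : ℝ) : 0 ≤ HH β lam u := by
  unfold HH
  split
  · exact le_min zero_le_one (le_ciInf fun m => HH_term_nonneg m u)
  · exact le_rfl

lemma HH_le_one (u : ℝ) : HH β lam u ≤ 1 := by
  unfold HH
  split
  · exact min_le_left _ _
  · exact zero_le_one

lemma HH_le {u : ℝ} (hu : 0 < u) (m : ℕ) :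
    HH β lam u ≤ bb β lam m * Real.exp (-(lam * TT β (u / aa β m))) := by
  unfold HH
  rw [if_pos hu]
  exact (min_le_right _ _).trans (ciInf_le (HH_bddBelow u) m)

include hβ hlam

lemma HH_mono : Monotone (HH β lam) := by
  intro u v huv
  by_cases hu : 0 < u
  · have hv : 0 < v := lt_of_lt_of_le hu huv
    unfold HH
    rw [if_pos hu, if_pos hv]
    refine min_le_min le_rfl (ciInf_mono (HH_bddBelow u) fun m => ?_)
    refine mul_le_mul_of_nonneg_left ?_ (bb_pos m).le
    apply Real.exp_le_exp.mpr
    apply neg_le_neg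
    apply mul_le_mul_of_nonneg_left _ hlam
    apply TT_anti hβ
    · exact div_pos hu (aa_pos m)
    · exact div_le_div_of_nonneg_right huv (aa_pos (β := β) m).le
  · rw [show HH β lam u = 0 from by unfold HH; rw [if_neg hu]]
    exact HH_nonneg v

lemma HH_pos {u : ℝ} (hu : 0 < u) : 0 < HH β lam u := by
  unfold HH
  rw [if_pos hu]
  refine lt_min one_pos ?_
  set F : ℕ → ℝ := fun m => bb β lam m * Real.exp (-(lam * TT β (u / aa β m))) with hF
  set M : ℕ := ⌈1/u⌉₊ with hM
  have hne : (Finset.range (M+1)).Nonempty := ⟨0, by simp⟩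
  have hεpos : 0 < min 1 ((Finset.range (M+1)).inf' hne F) := by
    refine lt_min one_pos ?_
    rw [Finset.lt_inf'_iff]
    intro m _
    exact mul_pos (bb_pos m) (Real.exp_pos _)
  refine lt_of_lt_of_le hεpos (le_ciInf fun m => ?_)
  rcases le_or_gt m M with hm | hm
  · exact le_trans (min_le_right _ _) (Finset.inf'_le F (Finset.mem_range.mpr (by omega)))
  · refine le_trans (min_le_left _ _) ?_
    have hMu : (1:ℝ)/u ≤ (m:ℝ) := by
      calc (1:ℝ)/u ≤ (⌈1/u⌉₊:ℝ) := Nat.le_ceil _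
        _ ≤ (m:ℝ) := by exact_mod_cast hm.le
    have h2 : 1 ≤ (m:ℝ) * u := (div_le_iff₀ hu).mp hMu
    have hu1 : (1:ℝ)/((m:ℝ)+1) ≤ u := by
      rw [div_le_iff₀ (show (0:ℝ) < (m:ℝ)+1 by positivity)]
      nlinarith
    have harg : 1/(((m:ℝ)+1) * aa β m) ≤ u / aa β m := by
      rw [div_mul_eq_div_div]
      exact div_le_div_of_nonneg_right hu1 (aa_pos (β := β) m).le
    have hTT : TT β (u / aa β m) ≤ TT β (1/(((m:ℝ)+1) * aa β m)) :=
      TT_anti hβ (one_div_pos.mpr (maa_pos (β := β) m)) harg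
    show 1 ≤ F m
    rw [hF]
    simp only
    rw [show bb β lam m = Real.exp (lam * TT β (1/(((m:ℝ)+1)*aa β m))) from rfl, ← Real.exp_add]
    apply Real.one_le_exp
    nlinarith [mul_le_mul_of_nonneg_left hTT hlam]

end Hsec

section Phsec
include hβ hlam

lemma HH_intble (x y : ℝ) : IntervalIntegrable (HH β lam) MeasureTheory.volume x y :=
  (HH_mono hβ hlam).intervalIntegrable

lemma ph_add (x y : ℝ) : ph β lam y = ph β lam x + ∫ u in x..y, HH β lam u := by
  unfold ph
  rw [intervalIntegral.integral_add_adjacent_intervals (HH_intble hβ hlam 0 x)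
    (HH_intble hβ hlam x y)]

lemma ph_mono : Monotone (ph β lam) := by
  intro x y hxy
  rw [ph_add hβ hlam x y]
  have : 0 ≤ ∫ u in x..y, HH β lam u :=
    intervalIntegral.integral_nonneg hxy (fun u _ => HH_nonneg u)
  linarith

lemma ph_lip : LipschitzWith 1 (ph β lam) := by
  refine LipschitzWith.of_dist_le_mul fun x y => ?_
  have h : ph β lam x - ph β lam y = ∫ u in y..x, HH β lam u := by
    rw [ph_add hβ hlam y x]; ring
  have hb : ∀ u ∈ Set.uIoc y x, ‖HH β lam u‖ ≤ 1 := fun u _ => by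
    rw [Real.norm_eq_abs, abs_of_nonneg (HH_nonneg u)]; exact HH_le_one u
  have hnorm := intervalIntegral.norm_integral_le_of_norm_le_const hb
  rw [Real.dist_eq, Real.dist_eq, h]
  simpa [Real.norm_eq_abs] using hnorm

lemma ph_le_mul {x : ℝ} (hx : 0 ≤ x) : ph β lam x ≤ x * HH β lam x := by
  unfold ph
  calc (∫ u in (0:ℝ)..x, HH β lam u) ≤ ∫ _u in (0:ℝ)..x, HH β lam x := by
        apply intervalIntegral.integral_mono_on hx (HH_intble hβ hlam 0 x)
          (intervalIntegrable_const)
        intro u hu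
        exact HH_mono hβ hlam hu.2
    _ = x * HH β lam x := by simp

lemma ph_nonneg {x : ℝ} (hx : 0 ≤ x) : 0 ≤ ph β lam x := by
  have h0 : ph β lam 0 = 0 := intervalIntegral.integral_same
  have := ph_mono hβ hlam hx
  rwa [h0] at this

lemma ph_strict : StrictMonoOn (ph β lam) (Ici 0) := by
  rintro x hx y hy hxy
  rw [ph_add hβ hlam x y]
  have hz : 0 < (x+y)/2 := by
    simp only [mem_Ici] at hx; linarith
  have hsplit : (∫ u in x..y, HH β lam u)
      = (∫ u in x..((x+y)/2), HH β lam u) + ∫ u in ((x+y)/2)..y, HH β lam u := by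
    rw [intervalIntegral.integral_add_adjacent_intervals (HH_intble hβ hlam _ _)
      (HH_intble hβ hlam _ _)]
  have h1 : 0 ≤ ∫ u in x..((x+y)/2), HH β lam u :=
    intervalIntegral.integral_nonneg (by linarith) (fun u _ => HH_nonneg u)
  have h2 : ((y - (x+y)/2)) * HH β lam ((x+y)/2) ≤ ∫ u in ((x+y)/2)..y, HH β lam u := by
    have := intervalIntegral.integral_mono_on (by linarith : (x+y)/2 ≤ y)
      (intervalIntegrable_const (c := HH β lam ((x+y)/2))) (HH_intble hβ hlam _ _)
      (fun u hu => HH_mono hβ hlam hu.1)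
    simpa using this
  have h3 : 0 < (y - (x+y)/2) * HH β lam ((x+y)/2) :=
    mul_pos (by linarith) (HH_pos hβ hlam hz)
  have : 0 < ∫ u in x..y, HH β lam u := by rw [hsplit]; linarith
  linarith

lemma ph_tendsto : Tendsto (ph β lam) atTop atTop := by
  have hkey : ∀ x ≥ (1:ℝ), ph β lam 1 + (x-1) * HH β lam 1 ≤ ph β lam x := by
    intro x hx
    rw [ph_add hβ hlam 1 x]
    have : (x-1) * HH β lam 1 ≤ ∫ u in (1:ℝ)..x, HH β lam u := by
      have := intervalIntegral.integral_mono_on hx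
        (intervalIntegrable_const (c := HH β lam 1)) (HH_intble hβ hlam _ _)
        (fun u hu => HH_mono hβ hlam hu.1)
      simpa using this
    linarith
  have hlin : Tendsto (fun x : ℝ => ph β lam 1 + (x-1) * HH β lam 1) atTop atTop := by
    apply tendsto_atTop_add_const_left
    exact Tendsto.atTop_mul_const (HH_pos hβ hlam one_pos)
      (tendsto_atTop_add_const_right _ _ tendsto_id)
  exact tendsto_atTop_mono' atTop (eventually_atTop.mpr ⟨1, hkey⟩) hlin

end Phsec

section Kfsec

lemma Abar_pos (u : ℝ) : 0 < Abar β lam u :=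
  mul_pos (mul_pos two_pos (aa_pos _)) (bb_pos _)

include hβ hlam

lemma Abar_mono : Monotone (Abar β lam) := by
  intro u v huv
  unfold Abar
  have h : ⌈u⌉₊ - 1 ≤ ⌈v⌉₊ - 1 := Nat.sub_le_sub_right (Nat.ceil_le_ceil huv) 1
  refine mul_le_mul (mul_le_mul le_rfl (aa_mono hβ h) (aa_pos _).le (by norm_num))
    (bb_mono hβ hlam h) (bb_pos _).le ?_
  exact mul_nonneg (by norm_num) (aa_pos _).le

lemma Abar_intble (x y : ℝ) : IntervalIntegrable (Abar β lam) MeasureTheory.volume x y :=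
  (Abar_mono hβ hlam).intervalIntegrable

lemma Kf_cont : Continuous (Kf β lam) := by
  have hF : Continuous (fun x : ℝ => ∫ u in (0:ℝ)..x, Abar β lam u) :=
    intervalIntegral.continuous_primitive (fun a b => Abar_intble hβ hlam a b) 0
  have hKf : Kf β lam = fun s =>
      (∫ u in (0:ℝ)..(s+1), Abar β lam u) - ∫ u in (0:ℝ)..s, Abar β lam u := by
    funext s
    rw [eq_sub_iff_add_eq, add_comm]
    exact intervalIntegral.integral_add_adjacent_intervals (Abar_intble hβ hlam 0 s)
      (Abar_intble hβ hlam s (s+1))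
  rw [hKf]
  exact (hF.comp (continuous_id.add continuous_const)).sub hF

lemma Kf_mono : Monotone (Kf β lam) := by
  intro s₁ s₂ h
  unfold Kf
  have heq : (∫ u in s₁..(s₁+1), Abar β lam u)
      = ∫ u in s₂..(s₂+1), Abar β lam (u - (s₂ - s₁)) := by
    rw [intervalIntegral.integral_comp_sub_right (fun u => Abar β lam u) (s₂ - s₁)]
    have e1 : s₂ - (s₂ - s₁) = s₁ := by ring
    have e2 : s₂ + 1 - (s₂ - s₁) = s₁ + 1 := by ring
    rw [e1, e2]
  rw [heq]
  refine intervalIntegral.integral_mono_on (by linarith)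
    (((Abar_mono hβ hlam).comp (fun a b hab => sub_le_sub_right hab _ :
      Monotone (fun u : ℝ => u - (s₂ - s₁)))).intervalIntegrable)
    (Abar_intble hβ hlam _ _) (fun u _ => Abar_mono hβ hlam (by linarith))

lemma Kf_ge (s : ℝ) : Abar β lam s ≤ Kf β lam s := by
  have h := intervalIntegral.integral_mono_on (by linarith : s ≤ s+1)
    (intervalIntegrable_const (c := Abar β lam s)) (Abar_intble hβ hlam s (s+1))
    (fun u hu => Abar_mono hβ hlam hu.1)
  simpa [Kf] using h

lemma Kf_nonneg (s : ℝ) : 0 ≤ Kf β lam s :=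
  le_trans (Abar_pos (β := β) (lam := lam) s).le (Kf_ge hβ hlam s)

end Kfsec

/-- square of a 1-Lipschitz function is locally Lipschitz -/
lemma sq_locallyLipschitz {f : ℝ → ℝ} (hf : LipschitzWith 1 f) :
    LocallyLipschitz (fun x => f x * f x) := by
  intro x
  refine ⟨Real.toNNReal (2*|f x| + 2), Metric.ball x 1, Metric.ball_mem_nhds x one_pos, ?_⟩
  refine LipschitzOnWith.of_dist_le_mul fun a ha b hb => ?_
  have hfa : |f a| ≤ |f x| + 1 := by
    have := hf.dist_le_mul a x
    rw [NNReal.coe_one, one_mul, Real.dist_eq, Real.dist_eq] at this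
    have hax : |a - x| < 1 := by simpa [Real.dist_eq] using Metric.mem_ball.mp ha
    calc |f a| ≤ |f x| + |f a - f x| := by
          have := abs_add_le (f x) (f a - f x); simpa [add_comm] using (by
            have h2 : f a = f x + (f a - f x) := by ring
            calc |f a| = |f x + (f a - f x)| := by rw [← h2]
              _ ≤ |f x| + |f a - f x| := abs_add_le _ _)
      _ ≤ |f x| + 1 := by linarith
  have hfb : |f b| ≤ |f x| + 1 := by
    have := hf.dist_le_mul b x
    rw [NNReal.coe_one, one_mul, Real.dist_eq, Real.dist_eq] at this
    have hbx : |b - x| < 1 := by simpa [Real.dist_eq] using Metric.mem_ball.mp hb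
    calc |f b| ≤ |f x| + |f b - f x| := by
          have h2 : f b = f x + (f b - f x) := by ring
          calc |f b| = |f x + (f b - f x)| := by rw [← h2]
            _ ≤ |f x| + |f b - f x| := abs_add_le _ _
      _ ≤ |f x| + 1 := by linarith
  have hd : dist (f a) (f b) ≤ dist a b := by
    have := hf.dist_le_mul a b
    rwa [NNReal.coe_one, one_mul] at this
  rw [Real.dist_eq] at *
  have key : |f a * f a - f b * f b| = |f a + f b| * |f a - f b| := by
    rw [← abs_mul]; ring_nf
  rw [key]
  have h1 : |f a + f b| ≤ 2*|f x| + 2 := by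
    calc |f a + f b| ≤ |f a| + |f b| := abs_add_le _ _
      _ ≤ 2*|f x| + 2 := by linarith
  have h2 : (Real.toNNReal (2*|f x| + 2) : ℝ) = 2*|f x| + 2 :=
    Real.coe_toNNReal _ (by positivity)
  rw [h2]
  exact mul_le_mul h1 hd (abs_nonneg _) (by positivity)

end Stmt8Aux

/-- Sontag's lemma on 𝒦𝓛-estimates: for any 𝒦𝓛 function `β` and `λ ≥ 0`
there exist `φ₁, φ₂ ∈ 𝒦∞` with `φ₁` locally Lipschitz such that
`φ₁(β(s,t)) ≤ φ₂(s) e^{−λ t}` for all `s, t ≥ 0`. -/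
theorem stmt8 (β : ℝ → ℝ → ℝ) (hβ : IsKLFun β) (lam : ℝ) (hlam : 0 ≤ lam) :
    ∃ φ₁ φ₂ : ℝ → ℝ, IsKInfFun φ₁ ∧ IsKInfFun φ₂ ∧ LocallyLipschitz φ₁ ∧
      ∀ s ≥ (0:ℝ), ∀ t ≥ (0:ℝ), φ₁ (β s t) ≤ φ₂ s * Real.exp (-lam * t) := by
  open Stmt8Aux in
  refine ⟨fun x => ph β lam x * ph β lam x, ph2 β lam, ?_, ?_, ?_, ?_⟩
  case _ =>
    -- φ₁ is 𝒦∞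
    refine ⟨⟨((ph_lip hβ hlam).continuous.mul (ph_lip hβ hlam).continuous).continuousOn,
      ?_, ?_⟩, ?_⟩
    · intro x hx y hy hxy
      exact mul_self_lt_mul_self (ph_nonneg hβ hlam hx) (ph_strict hβ hlam hx hy hxy)
    · have h0 : ph β lam 0 = 0 := intervalIntegral.integral_same
      simp [h0]
    · exact (ph_tendsto hβ hlam).atTop_mul_atTop₀ (ph_tendsto hβ hlam)
  case _ =>
    -- φ₂ is 𝒦∞
    have hσcont : ContinuousOn (fun s : ℝ => β s 0 + s) (Ici 0) :=
      (hβ.1 0 le_rfl).1.add continuousOn_id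
    have hσnonneg : ∀ s : ℝ, 0 ≤ s → 0 ≤ β s 0 + s := fun s hs =>
      add_nonneg (beta_nonneg hβ hs le_rfl) hs
    have hσmono : ∀ x y : ℝ, 0 ≤ x → x ≤ y → β x 0 + x ≤ β y 0 + y := fun x y hx hxy =>
      add_le_add (beta_mono_s hβ hx hxy le_rfl) hxy
    refine ⟨⟨?_, ?_, ?_⟩, ?_⟩
    · -- continuity
      exact (((ph_lip hβ hlam).continuous.comp_continuousOn hσcont).mul
        (Kf_cont hβ hlam).continuousOn).add continuousOn_id
    · -- strict monotonicity
      intro x hx y hy hxy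
      simp only [mem_Ici] at hx hy
      have h1 : ph β lam (β x 0 + x) * Kf β lam x ≤ ph β lam (β y 0 + y) * Kf β lam y :=
        mul_le_mul (ph_mono hβ hlam (hσmono x y hx hxy.le)) (Kf_mono hβ hlam hxy.le)
          (Kf_nonneg hβ hlam x) (ph_nonneg hβ hlam (hσnonneg y (hx.trans hxy.le)))
      exact add_lt_add_of_le_of_lt h1 hxy
    · -- zero
      show ph β lam (β 0 0 + 0) * Kf β lam 0 + 0 = 0
      rw [beta_zero hβ le_rfl]
      have h0 : ph β lam (0 + 0) = 0 := by
        norm_num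
        exact intervalIntegral.integral_same
      rw [h0, zero_mul, add_zero]
    · -- tendsto atTop
      refine tendsto_atTop_mono' atTop ?_ tendsto_id
      filter_upwards [eventually_ge_atTop (0:ℝ)] with s hs
      have : 0 ≤ ph β lam (β s 0 + s) * Kf β lam s :=
        mul_nonneg (ph_nonneg hβ hlam (hσnonneg s hs)) (Kf_nonneg hβ hlam s)
      show (id s : ℝ) ≤ ph β lam (β s 0 + s) * Kf β lam s + s
      simpa using this
  case _ => exact sq_locallyLipschitz (ph_lip hβ hlam)
  case _ =>
    intro s hs t ht
    rcases eq_or_lt_of_le hs with hs0 | hs0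
    · -- s = 0
      have hβ0 : β s t = 0 := by rw [← hs0]; exact beta_zero hβ ht
      have h0 : ph β lam 0 = 0 := intervalIntegral.integral_same
      have hph2 : ph2 β lam s = 0 := by
        rw [← hs0]
        show ph β lam (β 0 0 + 0) * Kf β lam 0 + 0 = 0
        rw [beta_zero hβ le_rfl]
        norm_num
        left; exact intervalIntegral.integral_same
      rw [hβ0, hph2]
      simp only [h0, mul_zero, zero_mul]
      exact le_rfl
    · -- s > 0
      set m : ℕ := ⌈s⌉₊ - 1 with hmdef
      have hceil1 : 1 ≤ ⌈s⌉₊ := Nat.one_le_ceil_iff.mpr hs0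
      have hm1 : ((m:ℝ)+1) = (⌈s⌉₊:ℝ) := by
        rw [hmdef]
        rw [Nat.cast_sub hceil1]
        push_cast
        ring
      have hsm : s ≤ (m:ℝ)+1 := by rw [hm1]; exact Nat.le_ceil s
      have h1 : β s t ≤ β ((m:ℝ)+1) t := beta_mono_s hβ hs hsm ht
      have h2 : β ((m:ℝ)+1) t ≤ aa β m * om β t := beta_le_om hβ m ht
      have hx : 0 < aa β m * om β t := mul_pos (aa_pos (β := β) m) (om_pos hβ ht)
      have hA : ph β lam (β s t) ≤ ph β lam (aa β m * om β t) :=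
        ph_mono hβ hlam (h1.trans h2)
      have hB : ph β lam (aa β m * om β t) ≤ (aa β m * om β t) * HH β lam (aa β m * om β t) :=
        ph_le_mul hβ hlam hx.le
      have hC := HH_le (β := β) (lam := lam) hx m
      have hdiv : (aa β m * om β t)/aa β m = om β t :=
        mul_div_cancel_left₀ _ (aa_pos (β := β) m).ne'
      rw [hdiv] at hC
      have hTTt : t ≤ TT β (om β t) := le_TT_om hβ ht
      have hexp : Real.exp (-(lam * TT β (om β t))) ≤ Real.exp (-(lam*t)) :=
        Real.exp_le_exp.mpr (neg_le_neg (mul_le_mul_of_nonneg_left hTTt hlam))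
      have hchain : ph β lam (β s t) ≤ Abar β lam s * Real.exp (-(lam*t)) := by
        have e1 : ph β lam (β s t) ≤ (aa β m * om β t) *
            (bb β lam m * Real.exp (-(lam * TT β (om β t)))) :=
          (hA.trans hB).trans (mul_le_mul_of_nonneg_left hC hx.le)
        have e2 : (aa β m * om β t) * (bb β lam m * Real.exp (-(lam * TT β (om β t))))
            ≤ (aa β m * 2) * (bb β lam m * Real.exp (-(lam*t))) := by
          refine mul_le_mul ?_ ?_ ?_ ?_
          · exact mul_le_mul_of_nonneg_left (om_le_two hβ ht) (aa_pos (β := β) m).le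
          · exact mul_le_mul_of_nonneg_left hexp (bb_pos (β := β) (lam := lam) m).le
          · exact mul_nonneg (bb_pos (β := β) (lam := lam) m).le (Real.exp_nonneg _)
          · exact mul_nonneg (aa_pos (β := β) m).le (by norm_num)
        have e3 : (aa β m * 2) * (bb β lam m * Real.exp (-(lam*t)))
            = Abar β lam s * Real.exp (-(lam*t)) := by
          show _ = 2 * aa β (⌈s⌉₊ - 1) * bb β lam (⌈s⌉₊ - 1) * _
          rw [← hmdef]
          ring
        exact e1.trans (e2.trans_eq e3)
      have hσ : β s t ≤ β s 0 + s := by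
        have := beta_anti_t hβ hs0 le_rfl ht
        linarith
      have hAσ : ph β lam (β s t) ≤ ph β lam (β s 0 + s) := ph_mono hβ hlam hσ
      have hσnn : 0 ≤ β s 0 + s := add_nonneg (beta_nonneg hβ hs le_rfl) hs
      have h0β : 0 ≤ ph β lam (β s t) := ph_nonneg hβ hlam (beta_nonneg hβ hs ht)
      have hsq : ph β lam (β s t) * ph β lam (β s t)
          ≤ ph β lam (β s 0 + s) * (Abar β lam s * Real.exp (-(lam*t))) :=
        mul_le_mul hAσ hchain h0β (ph_nonneg hβ hlam hσnn)
      have hfin : ph β lam (β s 0 + s) * Abar β lam s ≤ ph2 β lam s := by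
        calc ph β lam (β s 0 + s) * Abar β lam s
            ≤ ph β lam (β s 0 + s) * Kf β lam s :=
              mul_le_mul_of_nonneg_left (Kf_ge hβ hlam s) (ph_nonneg hβ hlam hσnn)
          _ ≤ ph2 β lam s := le_add_of_nonneg_right hs
      have hexpnn : (0:ℝ) ≤ Real.exp (-(lam*t)) := (Real.exp_pos _).le
      have hmul := mul_le_mul_of_nonneg_right hfin hexpnn
      calc ph β lam (β s t) * ph β lam (β s t)
          ≤ ph β lam (β s 0 + s) * (Abar β lam s * Real.exp (-(lam*t))) := hsq
        _ = (ph β lam (β s 0 + s) * Abar β lam s) * Real.exp (-(lam*t)) := by ring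
        _ ≤ ph2 β lam s * Real.exp (-(lam*t)) := hmul
        _ = ph2 β lam s * Real.exp (-lam*t) := by rw [neg_mul]
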